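/- For every real s, ∫₁^∞ u^{−s/2+2} θ(u) θ''(u) du = −θ(1)θ'(1) − (1/4)(s−4)(θ(1)² − 1) + (1/8)(s−2)(s−4) K₀(2−s) − K₁(2−s). -/

import Mathlib

open MeasureTheory

open Real Set Filter Topology

/-- The Jacobi theta function `θ(u) = ∑_{n∈ℤ} e^{-πn²u}`. -/
noncomputable def jTheta (u : ℝ) : ℝ := ∑' n : ℤ, Real.exp (-Real.pi * (n : ℝ) ^ 2 * u)

noncomputable def thk (k : ℕ) (u : ℝ) : ℝ :=
  ∑' n : ℤ, (-π * (n : ℝ) ^ 2) ^ k * Real.exp (-π * (n : ℝ) ^ 2 * u)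

lemma summable_aux (k : ℕ) {c : ℝ} (hc : 0 < c) :
    Summable (fun n : ℤ => (π * (n : ℝ) ^ 2) ^ k * Real.exp (-π * (n : ℝ) ^ 2 * c)) := by
  have hr : ‖Real.exp (-π * c)‖ < 1 := by
    rw [Real.norm_eq_abs, abs_of_pos (Real.exp_pos _)]
    rw [Real.exp_lt_one_iff]
    nlinarith [Real.pi_pos]
  have hnat : Summable (fun n : ℕ => (n : ℝ) ^ (2 * k) * Real.exp (-π * c) ^ n) :=
    summable_pow_mul_geometric_of_norm_lt_one _ hr
  have hNat : Summable (fun n : ℕ => (π * (n : ℝ) ^ 2) ^ k * Real.exp (-π * (n : ℝ) ^ 2 * c)) := by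
    apply Summable.of_nonneg_of_le (fun n => by positivity) _ (hnat.mul_left (π ^ k))
    intro n
    have h1 : Real.exp (-π * (n : ℝ) ^ 2 * c) ≤ Real.exp (-π * c) ^ n := by
      rw [← Real.exp_nat_mul, Real.exp_le_exp]
      have h2 : (n : ℝ) ≤ (n : ℝ) ^ 2 := by exact_mod_cast Nat.cast_le.mpr (Nat.le_self_pow two_ne_zero n)
      nlinarith [mul_nonneg (mul_pos Real.pi_pos hc).le (sub_nonneg.mpr h2)]
    calc (π * (n : ℝ) ^ 2) ^ k * Real.exp (-π * (n : ℝ) ^ 2 * c)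
        ≤ (π * (n : ℝ) ^ 2) ^ k * Real.exp (-π * c) ^ n := by
          apply mul_le_mul_of_nonneg_left h1 (by positivity)
      _ = π ^ k * ((n : ℝ) ^ (2 * k) * Real.exp (-π * c) ^ n) := by
          rw [mul_pow, pow_mul]; ring
  apply Summable.of_nat_of_neg
  · exact hNat.congr fun n => by push_cast; ring
  · exact hNat.congr fun n => by push_cast; ring

lemma summable_thk (k : ℕ) {c : ℝ} (hc : 0 < c) :
    Summable (fun n : ℤ => (-π * (n : ℝ) ^ 2) ^ k * Real.exp (-π * (n : ℝ) ^ 2 * c)) := by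
  have : (fun n : ℤ => (-π * (n : ℝ) ^ 2) ^ k * Real.exp (-π * (n : ℝ) ^ 2 * c))
      = fun n : ℤ => (-1) ^ k * ((π * (n : ℝ) ^ 2) ^ k * Real.exp (-π * (n : ℝ) ^ 2 * c)) := by
    funext n; rw [neg_mul, neg_pow]; ring
  rw [this]
  exact (summable_aux k hc).mul_left _

lemma thk_hasDerivAt (k : ℕ) {u : ℝ} (hu : 0 < u) :
    HasDerivAt (thk k) (thk (k + 1) u) u := by
  have h2 : (0 : ℝ) < u / 2 := by linarith
  exact hasDerivAt_tsum_of_isPreconnected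
    (u := fun n : ℤ => (π * (n : ℝ) ^ 2) ^ (k + 1) * Real.exp (-π * (n : ℝ) ^ 2 * (u / 2)))
    (g := fun n y => (-π * (n : ℝ) ^ 2) ^ k * Real.exp (-π * (n : ℝ) ^ 2 * y))
    (g' := fun n y => (-π * (n : ℝ) ^ 2) ^ (k + 1) * Real.exp (-π * (n : ℝ) ^ 2 * y))
    (summable_aux (k + 1) h2) isOpen_Ioi (isPreconnected_Ioi)
    (fun n y _ => by
      have h := (((hasDerivAt_id y).const_mul (-π * (n : ℝ) ^ 2)).exp).const_mul
        ((-π * (n : ℝ) ^ 2) ^ k)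
      simp only [id_eq] at h
      exact h.congr_deriv (by rw [pow_succ]; ring))
    (fun n y hy => by
      have habs : |(-π * (n : ℝ) ^ 2) ^ (k + 1)| = (π * (n : ℝ) ^ 2) ^ (k + 1) := by
        rw [abs_pow, neg_mul, abs_neg, abs_of_nonneg (by positivity)]
      rw [Real.norm_eq_abs, abs_mul, habs, abs_of_pos (Real.exp_pos _)]
      apply mul_le_mul_of_nonneg_left _ (by positivity)
      rw [Real.exp_le_exp]
      have : u / 2 ≤ y := le_of_lt hy
      nlinarith [mul_nonneg (mul_nonneg Real.pi_pos.le (sq_nonneg ((n:ℝ)))) (sub_nonneg.mpr this)])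
    (mem_Ioi.mpr (by linarith)) (summable_thk k hu) (mem_Ioi.mpr (by linarith))

lemma jTheta_eq : jTheta = thk 0 := by
  funext u; simp [jTheta, thk]

lemma term_mono {n : ℤ} {u : ℝ} (hu : 1 ≤ u) :
    Real.exp (-π * (n : ℝ) ^ 2 * u) ≤ Real.exp (-π * (n : ℝ) ^ 2) := by
  rw [Real.exp_le_exp]
  nlinarith [mul_nonneg (mul_nonneg Real.pi_pos.le (sq_nonneg ((n : ℝ)))) (sub_nonneg.mpr hu)]

lemma term_decay {n : ℤ} {u : ℝ} (hu : 1 ≤ u) (hn : n ≠ 0) :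
    Real.exp (-π * (n : ℝ) ^ 2 * u)
      ≤ Real.exp (-π * (u - 1)) * Real.exp (-π * (n : ℝ) ^ 2) := by
  rw [← Real.exp_add, Real.exp_le_exp]
  have h1 : (1 : ℝ) ≤ |(n : ℝ)| := by
    rw [← Int.cast_abs]; exact_mod_cast Int.one_le_abs hn
  have h2 : (1 : ℝ) ≤ (n : ℝ) ^ 2 := by nlinarith [sq_abs ((n:ℝ))]
  nlinarith [mul_nonneg (mul_nonneg Real.pi_pos.le (sub_nonneg.mpr h2)) (sub_nonneg.mpr hu)]

lemma thk_bound (k : ℕ) (hk : k ≠ 0) {u : ℝ} (hu : 1 ≤ u) :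
    |thk k u| ≤ (∑' n : ℤ, (π * (n : ℝ) ^ 2) ^ k * Real.exp (-π * (n : ℝ) ^ 2))
      * Real.exp (-π * (u - 1)) := by
  have hu0 : (0 : ℝ) < u := by linarith
  have habs : ∀ n : ℤ, ‖(-π * (n : ℝ) ^ 2) ^ k * Real.exp (-π * (n : ℝ) ^ 2 * u)‖
      = (π * (n : ℝ) ^ 2) ^ k * Real.exp (-π * (n : ℝ) ^ 2 * u) := by
    intro n
    rw [Real.norm_eq_abs, abs_mul, abs_pow, neg_mul, abs_neg,
      abs_of_nonneg (by positivity : (0:ℝ) ≤ π * (n : ℝ) ^ 2),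
      abs_of_pos (Real.exp_pos _)]
  calc |thk k u| ≤ ∑' n : ℤ, ‖(-π * (n : ℝ) ^ 2) ^ k * Real.exp (-π * (n : ℝ) ^ 2 * u)‖ := by
        rw [← Real.norm_eq_abs]
        apply norm_tsum_le_tsum_norm
        apply Summable.congr (summable_aux k hu0)
        intro n; rw [habs n]
    _ ≤ ∑' n : ℤ, Real.exp (-π * (u - 1))
          * ((π * (n : ℝ) ^ 2) ^ k * Real.exp (-π * (n : ℝ) ^ 2)) := by
        apply Summable.tsum_le_tsum _ ((summable_aux k hu0).congr (fun n => (habs n).symm))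
          (((summable_aux k one_pos).congr (fun n => by rw [mul_comm _ (1:ℝ)]; norm_num)).mul_left _)
        intro n
        rw [habs n]
        rcases eq_or_ne n 0 with rfl | hn
        · obtain ⟨k', rfl⟩ := Nat.exists_eq_succ_of_ne_zero hk
          simp [pow_succ]
        · calc (π * (n : ℝ) ^ 2) ^ k * Real.exp (-π * (n : ℝ) ^ 2 * u)
              ≤ (π * (n : ℝ) ^ 2) ^ k
                * (Real.exp (-π * (u - 1)) * Real.exp (-π * (n : ℝ) ^ 2)) :=
              mul_le_mul_of_nonneg_left (term_decay hu hn) (by positivity)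
            _ = _ := by ring
    _ = _ := by rw [tsum_mul_left]; ring

lemma jTheta_decomp {u : ℝ} (hu : 0 < u) :
    jTheta u = 1 + ∑' n : ℤ, ite (n = 0) 0 (Real.exp (-π * (n : ℝ) ^ 2 * u)) := by
  have hs : Summable (fun n : ℤ => Real.exp (-π * (n : ℝ) ^ 2 * u)) := by
    apply Summable.congr (summable_aux 0 hu); intro n; norm_num
  have := Summable.tsum_eq_add_tsum_ite hs 0
  simpa [jTheta] using this

lemma ite_summable {u : ℝ} (hu : 0 < u) :
    Summable (fun n : ℤ => ite (n = 0) 0 (Real.exp (-π * (n : ℝ) ^ 2 * u))) := by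
  have hs : Summable (fun n : ℤ => Real.exp (-π * (n : ℝ) ^ 2 * u)) := by
    apply Summable.congr (summable_aux 0 hu); intro n; norm_num
  apply Summable.of_nonneg_of_le _ _ hs
  · intro n; split <;> positivity
  · intro n; split
    · positivity
    · exact le_rfl

lemma jTheta_sub_one_bound {u : ℝ} (hu : 1 ≤ u) :
    |jTheta u - 1| ≤ (jTheta 1 - 1) * Real.exp (-π * (u - 1)) := by
  have hu0 : (0 : ℝ) < u := by linarith
  rw [jTheta_decomp hu0, jTheta_decomp one_pos]
  rw [add_sub_cancel_left, add_sub_cancel_left]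
  have h1 : |∑' n : ℤ, ite (n = 0) 0 (Real.exp (-π * (n : ℝ) ^ 2 * u))|
      = ∑' n : ℤ, ite (n = 0) 0 (Real.exp (-π * (n : ℝ) ^ 2 * u)) := by
    apply abs_of_nonneg
    apply tsum_nonneg; intro n; split <;> positivity
  rw [h1, mul_comm, ← tsum_mul_left]
  apply Summable.tsum_le_tsum _ (ite_summable hu0) ((ite_summable one_pos).mul_left _)
  intro n
  rcases eq_or_ne n 0 with rfl | hn
  · simp
  · simp only [if_neg hn]
    calc Real.exp (-π * (n : ℝ) ^ 2 * u)
        ≤ Real.exp (-π * (u - 1)) * Real.exp (-π * (n : ℝ) ^ 2) := term_decay hu hn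
      _ = Real.exp (-π * (u - 1)) * Real.exp (-π * (n : ℝ) ^ 2 * 1) := by norm_num

lemma jTheta_abs_le {u : ℝ} (hu : 1 ≤ u) : |jTheta u| ≤ jTheta 1 := by
  have hu0 : (0 : ℝ) < u := by linarith
  have hs : ∀ c : ℝ, 0 < c → Summable (fun n : ℤ => Real.exp (-π * (n : ℝ) ^ 2 * c)) := by
    intro c hc; apply Summable.congr (summable_aux 0 hc); intro n; norm_num
  have h0 : 0 ≤ jTheta u := tsum_nonneg (fun n => (Real.exp_pos _).le)
  rw [abs_of_nonneg h0]
  apply Summable.tsum_le_tsum _ (hs u hu0) _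
  · intro n
    calc Real.exp (-π * (n : ℝ) ^ 2 * u) ≤ Real.exp (-π * (n : ℝ) ^ 2) := term_mono hu
      _ = Real.exp (-π * (n : ℝ) ^ 2 * 1) := by norm_num
  · apply Summable.congr (hs 1 one_pos); intro n; norm_num

lemma key_tendsto {h : ℝ → ℝ} {C a : ℝ}
    (hb : ∀ u, 1 ≤ u → |h u| ≤ C * Real.exp (-π * (u - 1))) :
    Tendsto (fun u : ℝ => u ^ a * h u) atTop (𝓝 0) := by
  apply squeeze_zero_norm' (a := fun u => (C * Real.exp π) * (u ^ a * Real.exp (-π * u)))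
  · filter_upwards [eventually_ge_atTop (1 : ℝ)] with u hu
    have hu0 : (0 : ℝ) ≤ u := by linarith
    rw [Real.norm_eq_abs, abs_mul, abs_of_nonneg (Real.rpow_nonneg hu0 a)]
    calc u ^ a * |h u| ≤ u ^ a * (C * Real.exp (-π * (u - 1))) :=
          mul_le_mul_of_nonneg_left (hb u hu) (Real.rpow_nonneg hu0 a)
      _ = C * Real.exp π * (u ^ a * Real.exp (-π * u)) := by
          rw [show -π * (u - 1) = π + -(π * u) from by ring, Real.exp_add]
          rw [show -π * u = -(π * u) from by ring]
          ring
  · have := (tendsto_rpow_mul_exp_neg_mul_atTop_nhds_zero a π Real.pi_pos).const_mul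
      (C * Real.exp π)
    simpa using this

lemma key_integrable {h : ℝ → ℝ} {C a : ℝ} (hcont : ContinuousOn h (Ici 1))
    (hb : ∀ u, 1 ≤ u → |h u| ≤ C * Real.exp (-π * (u - 1))) :
    IntegrableOn (fun u : ℝ => u ^ a * h u) (Ioi 1) := by
  apply integrable_of_isBigO_exp_neg (b := 1) one_pos
  · apply ContinuousOn.mul _ hcont
    intro x hx
    have hx0 : x ≠ 0 := by
      have : (1 : ℝ) ≤ x := hx
      intro h0; rw [h0] at this; linarith
    exact (Real.continuousAt_rpow_const x a (Or.inl hx0)).continuousWithinAt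
  · have h1 : (fun u : ℝ => u ^ a * h u) =O[atTop] fun u => u ^ a * Real.exp (-π * u) := by
      apply Asymptotics.IsBigO.mul (Asymptotics.isBigO_refl _ _)
      apply Asymptotics.IsBigO.of_bound (C * Real.exp π)
      filter_upwards [eventually_ge_atTop (1 : ℝ)] with u hu
      rw [Real.norm_eq_abs, Real.norm_eq_abs, abs_of_pos (Real.exp_pos _)]
      calc |h u| ≤ C * Real.exp (-π * (u - 1)) := hb u hu
        _ = C * Real.exp π * Real.exp (-π * u) := by
            rw [show -π * (u - 1) = π + -π * u from by ring, Real.exp_add]; ring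
    apply h1.trans
    have h3 := tendsto_rpow_mul_exp_neg_mul_atTop_nhds_zero a (π - 1)
      (by nlinarith [Real.pi_gt_three])
    have h4 : ∀ᶠ u in atTop, |u ^ a * Real.exp (-(π - 1) * u)| < 1 := by
      have := Metric.tendsto_nhds.mp h3 1 one_pos
      simpa only [Real.dist_eq, sub_zero] using this
    apply Asymptotics.IsBigO.of_bound 1
    filter_upwards [h4] with u hu
    rw [Real.norm_eq_abs, Real.norm_eq_abs]
    have heq : u ^ a * Real.exp (-π * u)
        = (u ^ a * Real.exp (-(π - 1) * u)) * Real.exp (-1 * u) := by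
      rw [mul_assoc, ← Real.exp_add]
      congr 1
      ring
    rw [heq, abs_mul, abs_of_pos (Real.exp_pos _)]
    exact mul_le_mul_of_nonneg_right hu.le (Real.exp_pos _).le

lemma thk_contOn (k : ℕ) : ContinuousOn (thk k) (Ici 1) := fun x hx =>
  ((thk_hasDerivAt k (lt_of_lt_of_le one_pos hx)).continuousAt).continuousWithinAt

lemma jTheta_contOn : ContinuousOn jTheta (Ici 1) := jTheta_eq ▸ thk_contOn 0

lemma prod_bound {f g : ℝ → ℝ} {A B : ℝ} (hA : 0 ≤ A)
    (hf : ∀ u, 1 ≤ u → |f u| ≤ A)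
    (hg : ∀ u, 1 ≤ u → |g u| ≤ B * Real.exp (-π * (u - 1))) :
    ∀ u, 1 ≤ u → |f u * g u| ≤ (A * B) * Real.exp (-π * (u - 1)) := by
  intro u hu
  rw [abs_mul]
  calc |f u| * |g u| ≤ A * (B * Real.exp (-π * (u - 1))) :=
        mul_le_mul (hf u hu) (hg u hu) (abs_nonneg _) hA
    _ = A * B * Real.exp (-π * (u - 1)) := by ring

lemma hasDerivAt_jTheta {u : ℝ} (hu : 0 < u) : HasDerivAt jTheta (thk 1 u) u :=
  jTheta_eq ▸ thk_hasDerivAt 0 hu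

lemma deriv_jTheta {u : ℝ} (hu : 0 < u) : deriv jTheta u = thk 1 u :=
  (hasDerivAt_jTheta hu).deriv

lemma deriv2_jTheta {u : ℝ} (hu : 0 < u) : deriv (deriv jTheta) u = thk 2 u := by
  have he : deriv jTheta =ᶠ[nhds u] thk 1 :=
    eventuallyEq_of_mem (Ioi_mem_nhds hu) (fun x hx => deriv_jTheta hx)
  rw [he.deriv_eq]
  exact (thk_hasDerivAt 1 hu).deriv

lemma one_le_jTheta_one : 1 ≤ jTheta 1 := by
  rw [jTheta_decomp one_pos]
  have : 0 ≤ ∑' n : ℤ, ite (n = 0) 0 (Real.exp (-π * (n : ℝ) ^ 2 * 1)) := by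
    apply tsum_nonneg; intro n; split <;> positivity
  linarith

noncomputable def Cth (k : ℕ) : ℝ := ∑' n : ℤ, (π * (n : ℝ) ^ 2) ^ k * Real.exp (-π * (n : ℝ) ^ 2)

lemma Cth_nonneg (k : ℕ) : 0 ≤ Cth k := tsum_nonneg fun n => by positivity

lemma jTheta_one_nonneg : 0 ≤ jTheta 1 := by linarith [one_le_jTheta_one]

lemma abs_jTheta_le : ∀ u : ℝ, 1 ≤ u → |jTheta u| ≤ jTheta 1 := fun _ hu => jTheta_abs_le hu

lemma thk_bound' (k : ℕ) (hk : k ≠ 0) : ∀ u : ℝ, 1 ≤ u →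
    |thk k u| ≤ Cth k * Real.exp (-π * (u - 1)) := fun _ hu => thk_bound k hk hu

lemma abs_thk_le (k : ℕ) (hk : k ≠ 0) : ∀ u : ℝ, 1 ≤ u → |thk k u| ≤ Cth k := by
  intro u hu
  have h1 := thk_bound' k hk u hu
  have h2 : Real.exp (-π * (u - 1)) ≤ 1 := by
    rw [Real.exp_le_one_iff]
    nlinarith [Real.pi_pos]
  nlinarith [Cth_nonneg k, Real.exp_pos (-π * (u - 1)), abs_nonneg (thk k u)]

lemma bound_P : ∀ u : ℝ, 1 ≤ u →
    |jTheta u * thk 1 u| ≤ jTheta 1 * Cth 1 * Real.exp (-π * (u - 1)) :=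
  prod_bound jTheta_one_nonneg abs_jTheta_le (thk_bound' 1 one_ne_zero)

lemma bound_P2 : ∀ u : ℝ, 1 ≤ u →
    |2 * jTheta u * thk 1 u| ≤ 2 * (jTheta 1 * Cth 1) * Real.exp (-π * (u - 1)) := by
  intro u hu
  have := bound_P u hu
  rw [mul_assoc, abs_mul, abs_two]
  rw [mul_assoc 2]
  exact mul_le_mul_of_nonneg_left this (by norm_num)

lemma bound_Q : ∀ u : ℝ, 1 ≤ u →
    |thk 1 u ^ 2| ≤ Cth 1 * Cth 1 * Real.exp (-π * (u - 1)) := by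
  intro u hu
  have := prod_bound (Cth_nonneg 1) (abs_thk_le 1 one_ne_zero) (thk_bound' 1 one_ne_zero) u hu
  calc |thk 1 u ^ 2| = |thk 1 u * thk 1 u| := by rw [sq]
    _ ≤ _ := this

lemma bound_R : ∀ u : ℝ, 1 ≤ u →
    |jTheta u * thk 2 u| ≤ jTheta 1 * Cth 2 * Real.exp (-π * (u - 1)) :=
  prod_bound jTheta_one_nonneg abs_jTheta_le (thk_bound' 2 two_ne_zero)

lemma bound_S : ∀ u : ℝ, 1 ≤ u →
    |jTheta u ^ 2 - 1| ≤ (jTheta 1 + 1) * (jTheta 1 - 1) * Real.exp (-π * (u - 1)) := by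
  intro u hu
  have := prod_bound (A := jTheta 1 + 1) (B := jTheta 1 - 1)
    (f := fun u => jTheta u + 1) (g := fun u => jTheta u - 1)
    (by linarith [one_le_jTheta_one])
    (fun v hv => by
      calc |jTheta v + 1| ≤ |jTheta v| + 1 := by
            have := abs_add_le (jTheta v) 1; simpa using this
        _ ≤ jTheta 1 + 1 := by linarith [jTheta_abs_le hv])
    (fun v hv => jTheta_sub_one_bound hv) u hu
  calc |jTheta u ^ 2 - 1|
      = |(jTheta u + 1) * (jTheta u - 1)| := by rw [show jTheta u ^ 2 - 1
        = (jTheta u + 1) * (jTheta u - 1) from by ring]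
    _ ≤ _ := this

lemma contP : ContinuousOn (fun u : ℝ => jTheta u * thk 1 u) (Ici 1) :=
  jTheta_contOn.mul (thk_contOn 1)

lemma contP2 : ContinuousOn (fun u : ℝ => 2 * jTheta u * thk 1 u) (Ici 1) :=
  ((continuousOn_const.mul jTheta_contOn)).mul (thk_contOn 1)

lemma contQ : ContinuousOn (fun u : ℝ => thk 1 u ^ 2) (Ici 1) := (thk_contOn 1).pow 2

lemma contR : ContinuousOn (fun u : ℝ => jTheta u * thk 2 u) (Ici 1) :=
  jTheta_contOn.mul (thk_contOn 2)

lemma contS : ContinuousOn (fun u : ℝ => jTheta u ^ 2 - 1) (Ici 1) :=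
  (jTheta_contOn.pow 2).sub continuousOn_const

lemma intP (b : ℝ) : IntegrableOn (fun u : ℝ => u ^ b * (jTheta u * thk 1 u)) (Ioi 1) :=
  key_integrable contP bound_P

lemma intP2 (b : ℝ) : IntegrableOn (fun u : ℝ => u ^ b * (2 * jTheta u * thk 1 u)) (Ioi 1) :=
  key_integrable contP2 bound_P2

lemma intQ (b : ℝ) : IntegrableOn (fun u : ℝ => u ^ b * thk 1 u ^ 2) (Ioi 1) :=
  key_integrable contQ bound_Q

lemma intR (b : ℝ) : IntegrableOn (fun u : ℝ => u ^ b * (jTheta u * thk 2 u)) (Ioi 1) :=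
  key_integrable contR bound_R

lemma intS (b : ℝ) : IntegrableOn (fun u : ℝ => u ^ b * (jTheta u ^ 2 - 1)) (Ioi 1) :=
  key_integrable contS bound_S

lemma IBP1 (a : ℝ) :
    (∫ u in Ioi (1 : ℝ), (a * u ^ (a - 1) * (jTheta u * thk 1 u)
        + u ^ a * (thk 1 u ^ 2 + jTheta u * thk 2 u)))
      = -(jTheta 1 * thk 1 1) := by
  have hderiv : ∀ x ∈ Ici (1 : ℝ), HasDerivAt (fun u : ℝ => u ^ a * (jTheta u * thk 1 u))
      (a * x ^ (a - 1) * (jTheta x * thk 1 x)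
        + x ^ a * (thk 1 x ^ 2 + jTheta x * thk 2 x)) x := by
    intro x hx
    have hx0 : (0 : ℝ) < x := lt_of_lt_of_le one_pos hx
    have h1 := Real.hasDerivAt_rpow_const (x := x) (p := a) (Or.inl hx0.ne')
    have h2 := (hasDerivAt_jTheta hx0).mul (thk_hasDerivAt 1 hx0)
    have h3 := h1.mul h2
    exact h3.congr_deriv (by simp only [Pi.mul_apply]; ring)
  have hint : IntegrableOn (fun x : ℝ => a * x ^ (a - 1) * (jTheta x * thk 1 x)
      + x ^ a * (thk 1 x ^ 2 + jTheta x * thk 2 x)) (Ioi 1) := by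
    have h := (((intP (a - 1)).const_mul a).add ((intQ a).add (intR a)))
    apply h.congr
    apply Filter.EventuallyEq.of_eq
    funext x
    simp only [Pi.add_apply]
    ring
  have htend : Tendsto (fun u : ℝ => u ^ a * (jTheta u * thk 1 u)) atTop (𝓝 0) :=
    key_tendsto bound_P
  have := integral_Ioi_of_hasDerivAt_of_tendsto' hderiv hint htend
  rw [this, Real.one_rpow]
  ring

lemma IBP2 (a : ℝ) :
    (∫ u in Ioi (1 : ℝ), ((a - 1) * u ^ (a - 2) * (jTheta u ^ 2 - 1)
        + u ^ (a - 1) * (2 * jTheta u * thk 1 u)))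
      = -(jTheta 1 ^ 2 - 1) := by
  have hderiv : ∀ x ∈ Ici (1 : ℝ), HasDerivAt (fun u : ℝ => u ^ (a - 1) * (jTheta u ^ 2 - 1))
      ((a - 1) * x ^ (a - 2) * (jTheta x ^ 2 - 1)
        + x ^ (a - 1) * (2 * jTheta x * thk 1 x)) x := by
    intro x hx
    have hx0 : (0 : ℝ) < x := lt_of_lt_of_le one_pos hx
    have h1 := Real.hasDerivAt_rpow_const (x := x) (p := a - 1) (Or.inl hx0.ne')
    rw [show a - 1 - 1 = a - 2 from by ring] at h1
    have h2 := ((hasDerivAt_jTheta hx0).pow 2).sub_const 1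
    have h3 := h1.mul h2
    exact h3.congr_deriv (by simp only [Pi.pow_apply]; push_cast; ring)
  have hint : IntegrableOn (fun x : ℝ => (a - 1) * x ^ (a - 2) * (jTheta x ^ 2 - 1)
      + x ^ (a - 1) * (2 * jTheta x * thk 1 x)) (Ioi 1) := by
    have h := (((intS (a - 2)).const_mul (a - 1)).add (intP2 (a - 1)))
    apply h.congr
    apply Filter.EventuallyEq.of_eq
    funext x
    simp only [Pi.add_apply]
    ring
  have htend : Tendsto (fun u : ℝ => u ^ (a - 1) * (jTheta u ^ 2 - 1)) atTop (𝓝 0) :=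
    key_tendsto bound_S
  have := integral_Ioi_of_hasDerivAt_of_tendsto' hderiv hint htend
  rw [this, Real.one_rpow]
  ring

lemma main_calc (a : ℝ) :
    (∫ u in Ioi (1 : ℝ), u ^ a * (jTheta u * thk 2 u))
      = -(jTheta 1 * thk 1 1) + (a / 2) * (jTheta 1 ^ 2 - 1)
        + (a * (a - 1) / 2) * (∫ u in Ioi (1 : ℝ), u ^ (a - 2) * (jTheta u ^ 2 - 1))
        - ∫ u in Ioi (1 : ℝ), u ^ a * thk 1 u ^ 2 := by
  have h1 := IBP1 a
  have h2 := IBP2 a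
  have e1 : (fun u : ℝ => a * u ^ (a - 1) * (jTheta u * thk 1 u)
      + u ^ a * (thk 1 u ^ 2 + jTheta u * thk 2 u))
      = fun u : ℝ => a * (u ^ (a - 1) * (jTheta u * thk 1 u))
        + (u ^ a * thk 1 u ^ 2 + u ^ a * (jTheta u * thk 2 u)) := by
    funext u; ring
  rw [e1] at h1
  have hQR : IntegrableOn (fun u : ℝ => u ^ a * thk 1 u ^ 2
      + u ^ a * (jTheta u * thk 2 u)) (Ioi 1) := (intQ a).add (intR a)
  rw [integral_add ((intP (a - 1)).const_mul a) hQR,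
    integral_add (intQ a) (intR a), integral_const_mul] at h1
  have e2 : (fun u : ℝ => (a - 1) * u ^ (a - 2) * (jTheta u ^ 2 - 1)
      + u ^ (a - 1) * (2 * jTheta u * thk 1 u))
      = fun u : ℝ => (a - 1) * (u ^ (a - 2) * (jTheta u ^ 2 - 1))
        + 2 * (u ^ (a - 1) * (jTheta u * thk 1 u)) := by
    funext u; ring
  rw [e2] at h2
  rw [integral_add ((intS (a - 2)).const_mul (a - 1)) ((intP (a - 1)).const_mul 2),
    integral_const_mul, integral_const_mul] at h2
  linear_combination h1 - (a / 2) * h2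


/-- `K₀(s) = ∫₁^∞ u^{s/2-1}(θ(u)²-1) du`. -/
noncomputable def Kzero (s : ℝ) : ℝ :=
  ∫ u in Set.Ioi (1 : ℝ), u ^ (s / 2 - 1) * ((jTheta u) ^ 2 - 1)

/-- `K₁(s) = ∫₁^∞ u^{s/2+1} θ'(u)² du`. -/
noncomputable def Kone (s : ℝ) : ℝ :=
  ∫ u in Set.Ioi (1 : ℝ), u ^ (s / 2 + 1) * (deriv jTheta u) ^ 2

/-- For every real `s`,
`∫₁^∞ u^{-s/2+2} θ(u)θ''(u) du
  = -θ(1)θ'(1) - (1/4)(s-4)(θ(1)²-1) + (1/8)(s-2)(s-4) K₀(2-s) - K₁(2-s)`. -/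
theorem J2_eval (s : ℝ) :
    (∫ u in Set.Ioi (1 : ℝ), u ^ (-s / 2 + 2) * (jTheta u * deriv (deriv jTheta) u))
      = -(jTheta 1 * deriv jTheta 1) - (1 / 4) * (s - 4) * ((jTheta 1) ^ 2 - 1)
        + (1 / 8) * (s - 2) * (s - 4) * Kzero (2 - s) - Kone (2 - s) := by
  have key := main_calc (-s / 2 + 2)
  have e0 : (∫ u in Ioi (1 : ℝ), u ^ (-s / 2 + 2) * (jTheta u * deriv (deriv jTheta) u))
      = ∫ u in Ioi (1 : ℝ), u ^ (-s / 2 + 2) * (jTheta u * thk 2 u) := by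
    apply setIntegral_congr_fun measurableSet_Ioi
    intro x hx
    dsimp only
    rw [deriv2_jTheta (lt_trans one_pos hx)]
  have e1 : Kone (2 - s) = ∫ u in Ioi (1 : ℝ), u ^ (-s / 2 + 2) * thk 1 u ^ 2 := by
    unfold Kone
    apply setIntegral_congr_fun measurableSet_Ioi
    intro x hx
    dsimp only
    rw [deriv_jTheta (lt_trans one_pos hx), show (2 - s) / 2 + 1 = -s / 2 + 2 from by ring]
  have e2 : Kzero (2 - s) = ∫ u in Ioi (1 : ℝ), u ^ (-s / 2 + 2 - 2) * (jTheta u ^ 2 - 1) := by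
    unfold Kzero
    apply setIntegral_congr_fun measurableSet_Ioi
    intro _ _
    dsimp only
    rw [show (2 - s) / 2 - 1 = -s / 2 + 2 - 2 from by ring]
  rw [e0, e1, e2, key, deriv_jTheta one_pos]
  ring
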